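/- Let {W_i}_{i=1}^n be subspaces of R^d with orthogonal projections {P_i}_{i=1}^n such that {W_i}_{i=1}^n does phase retrieval. Then {W_i^⊥}_{i=1}^n (with projections I - P_i) does phase retrieval if and only if it does norm retrieval. -/

import Mathlib

open scoped InnerProductSpace

/-- If `{Wᵢ}` does phase retrieval, then `{Wᵢᗮ}` does phase retrieval iff it does
norm retrieval. -/
theorem complements_phase_iff_norm (d n : ℕ)
    (W : Fin n → Submodule ℝ (EuclideanSpace ℝ (Fin d)))
    (hPR : ∀ x y : EuclideanSpace ℝ (Fin d),
      (∀ i, ‖(Submodule.orthogonalProjectionOnto (W i) x : EuclideanSpace ℝ (Fin d))‖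
        = ‖(Submodule.orthogonalProjectionOnto (W i) y : EuclideanSpace ℝ (Fin d))‖) → x = y ∨ x = -y) :
    (∀ x y : EuclideanSpace ℝ (Fin d),
      (∀ i, ‖(Submodule.orthogonalProjectionOnto (W i)ᗮ x : EuclideanSpace ℝ (Fin d))‖
        = ‖(Submodule.orthogonalProjectionOnto (W i)ᗮ y : EuclideanSpace ℝ (Fin d))‖) → x = y ∨ x = -y) ↔
    (∀ x y : EuclideanSpace ℝ (Fin d),
      (∀ i, ‖(Submodule.orthogonalProjectionOnto (W i)ᗮ x : EuclideanSpace ℝ (Fin d))‖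
        = ‖(Submodule.orthogonalProjectionOnto (W i)ᗮ y : EuclideanSpace ℝ (Fin d))‖) → ‖x‖ = ‖y‖) := by
  constructor
  · intro h x y hxy
    rcases h x y hxy with rfl | rfl
    · rfl
    · simp
  · intro h x y hxy
    have hnorm : ‖x‖ = ‖y‖ := h x y hxy
    apply hPR
    intro i
    have hx := Submodule.norm_sq_eq_add_norm_sq_projection x (W i)
    have hy := Submodule.norm_sq_eq_add_norm_sq_projection y (W i)
    have h1 : ‖(Submodule.orthogonalProjectionOnto (W i) x : EuclideanSpace ℝ (Fin d))‖ ^ 2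
        = ‖(Submodule.orthogonalProjectionOnto (W i) y : EuclideanSpace ℝ (Fin d))‖ ^ 2 := by
      have h2 := hxy i
      have hn2 : ‖x‖ ^ 2 = ‖y‖ ^ 2 := by rw [hnorm]
      simp only [Submodule.norm_coe] at *
      rw [h2] at hx
      linarith
    exact (sq_eq_sq₀ (norm_nonneg _) (norm_nonneg _)).mp h1
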